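/- Let p be an odd prime and 𝒞 ⊆ 𝔽_p^{2n} a linear code. The Construction A lattice Λ(𝒞) is even with respect to the form λ ⊙ λ' = λ η λ'^T (i.e., λ ⊙ λ ∈ 2ℤ for all λ ∈ Λ(𝒞)) if and only if 𝒞 is self-orthogonal with respect to η (i.e., c ⊙ c' = 0 mod p for all c, c' ∈ 𝒞). -/

import Mathlib

/-- The inner product on `𝔽_p^{2n}` with respect to the off-diagonal Lorentzian metric
`η = [[0,I_n],[I_n,0]]`. -/
def etaDot (p n : ℕ) (c c' : Fin n ⊕ Fin n → ZMod p) : ZMod p :=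
  ∑ i : Fin n, (c (Sum.inl i) * c' (Sum.inr i) + c (Sum.inr i) * c' (Sum.inl i))

/-- The Construction A lattice `Λ(𝒞) = {v/√p : v ∈ ℤ^{2n}, v mod p ∈ 𝒞}`. -/
def latticeA (p n : ℕ) (𝒞 : Set (Fin n ⊕ Fin n → ZMod p)) :
    Set (Fin n ⊕ Fin n → ℝ) :=
  {x | ∃ v : Fin n ⊕ Fin n → ℤ, (fun i => ((v i : ZMod p))) ∈ 𝒞 ∧
        x = fun i => (v i : ℝ) / Real.sqrt p}

/-- The real bilinear form `λ ⊙ λ' = λ η λ'^T` with `η = [[0,I_n],[I_n,0]]`. -/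
def etaDotR (n : ℕ) (x y : Fin n ⊕ Fin n → ℝ) : ℝ :=
  ∑ i : Fin n, (x (Sum.inl i) * y (Sum.inr i) + x (Sum.inr i) * y (Sum.inl i))

lemma etaDotR_eq (p n : ℕ) (hp : 0 < p) (v : Fin n ⊕ Fin n → ℤ) :
    etaDotR n (fun i => (v i : ℝ) / Real.sqrt p) (fun i => (v i : ℝ) / Real.sqrt p)
      = 2 * ((∑ i : Fin n, v (Sum.inl i) * v (Sum.inr i) : ℤ) : ℝ) / p := by
  have hp0 : (p : ℝ) ≠ 0 := by positivity
  have hs : Real.sqrt p * Real.sqrt p = p := Real.mul_self_sqrt (by positivity)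
  unfold etaDotR
  push_cast
  rw [Finset.mul_sum, Finset.sum_div]
  apply Finset.sum_congr rfl
  intro i _
  field_simp
  rw [Real.sq_sqrt (Nat.cast_nonneg _)]
  ring

lemma cast_sum (p n : ℕ) (v : Fin n ⊕ Fin n → ℤ) :
    ((∑ i : Fin n, v (Sum.inl i) * v (Sum.inr i) : ℤ) : ZMod p)
      = ∑ i : Fin n, ((v (Sum.inl i) : ZMod p) * (v (Sum.inr i) : ZMod p)) := by
  push_cast; rfl


/-- For an odd prime `p` and a linear code `𝒞 ⊆ 𝔽_p^{2n}`, the Construction A lattice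
`Λ(𝒞)` is even with respect to `η` iff `𝒞` is self-orthogonal with respect to `η`. -/
theorem stmt7 (p n : ℕ) (hp : p.Prime) (hp2 : p ≠ 2)
    (𝒞 : Submodule (ZMod p) (Fin n ⊕ Fin n → ZMod p)) :
    (∀ x ∈ latticeA p n 𝒞, ∃ m : ℤ, etaDotR n x x = 2 * m) ↔
      (∀ c ∈ 𝒞, ∀ c' ∈ 𝒞, etaDot p n c c' = 0) := by
  haveI : Fact p.Prime := ⟨hp⟩
  have hp0 : 0 < p := hp.pos
  have hpR : (p : ℝ) ≠ 0 := by positivity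
  have h2 : (2 : ZMod p) ≠ 0 := by
    have : ((2 : ℕ) : ZMod p) ≠ 0 := by
      rw [Ne, ZMod.natCast_eq_zero_iff]
      intro h
      exact (hp2 ((Nat.prime_dvd_prime_iff_eq hp Nat.prime_two).mp h)).elim
    simpa using this
  constructor
  · intro heven
    -- first: diagonal vanishes
    have hdiag : ∀ c ∈ 𝒞, etaDot p n c c = 0 := by
      intro c hc
      set v : Fin n ⊕ Fin n → ℤ := fun i => ((c i).val : ℤ) with hv
      have hmod : (fun i => ((v i : ZMod p))) = c := by
        funext i; simp [hv, ZMod.natCast_val, ZMod.intCast_cast, ZMod.ringHom_map_cast]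
      have hmem : (fun i => (v i : ℝ) / Real.sqrt p) ∈ latticeA p n 𝒞 :=
        ⟨v, by rw [hmod]; exact hc, rfl⟩
      obtain ⟨m, hm⟩ := heven _ hmem
      rw [etaDotR_eq p n hp0 v] at hm
      set S : ℤ := ∑ i : Fin n, v (Sum.inl i) * v (Sum.inr i) with hS
      have hSm : (S : ℝ) = p * m := by
        field_simp at hm
        linarith [hm]
      have hSZ : S = p * m := by exact_mod_cast hSm
      have hS0 : (S : ZMod p) = 0 := by
        rw [hSZ]; push_cast; simp
      rw [cast_sum] at hS0
      have : etaDot p n c c = 2 * ∑ i : Fin n, c (Sum.inl i) * c (Sum.inr i) := by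
        unfold etaDot; rw [Finset.mul_sum]; apply Finset.sum_congr rfl; intro i _; ring
      rw [this]
      have hcast : ∑ i : Fin n, c (Sum.inl i) * c (Sum.inr i) = 0 := by
        rw [← hS0]; apply Finset.sum_congr rfl; intro i _
        rw [← congrFun hmod (Sum.inl i), ← congrFun hmod (Sum.inr i)]
      rw [hcast, mul_zero]
    intro c hc c' hc'
    have h1 := hdiag c hc
    have h2' := hdiag c' hc'
    have h3 := hdiag (c + c') (𝒞.add_mem hc hc')
    have hpol : etaDot p n (c + c') (c + c')
        = etaDot p n c c + etaDot p n c' c' + 2 * etaDot p n c c' := by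
      unfold etaDot
      rw [Finset.mul_sum, ← Finset.sum_add_distrib, ← Finset.sum_add_distrib]
      apply Finset.sum_congr rfl; intro i _; simp; ring
    rw [hpol, h1, h2'] at h3
    simp at h3
    rcases h3 with h3 | h3
    · exact absurd h3 h2
    · exact h3
  · intro hso x hx
    obtain ⟨v, hvc, rfl⟩ := hx
    set S : ℤ := ∑ i : Fin n, v (Sum.inl i) * v (Sum.inr i) with hS
    have hd := hso _ hvc _ hvc
    have hSd : (S : ZMod p) = ∑ i : Fin n, ((v (Sum.inl i) : ZMod p) * (v (Sum.inr i) : ZMod p)) :=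
      cast_sum p n v
    have h2S : (2 : ZMod p) * (S : ZMod p) = 0 := by
      rw [hSd, Finset.mul_sum, ← hd]
      unfold etaDot
      apply Finset.sum_congr rfl; intro i _; ring
    have hS0 : (S : ZMod p) = 0 := by
      rcases mul_eq_zero.mp h2S with h | h
      · exact absurd h h2
      · exact h
    have hdvd : (p : ℤ) ∣ S := by
      rwa [← ZMod.intCast_zmod_eq_zero_iff_dvd]
    obtain ⟨m, hm⟩ := hdvd
    refine ⟨m, ?_⟩
    rw [etaDotR_eq p n hp0 v, ← hS, hm]
    push_cast
    field_simp
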